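/- arXiv:2401.01471 — 3 statements merged into one kernel-verified Lean document; each statement's English description precedes it below -/
import Mathlib

section
/- Every n-by-n monomial matrix is permutation-similar to a direct sum of matrices of the form K_{y_i}. Precisely: if A = D_x P is an n-by-n monomial matrix (D_x an invertible diagonal matrix, P a permutation matrix), then there exist an n-by-n permutation matrix Q, an integer k with 1 ≤ k ≤ n, positive integers n_1,…,n_k with n_1 + ⋯ + n_k = n, and vectors y_i ∈ ℂ^{n_i}, obtained by partitioning y = Qᵀx into consecutive blocks of sizes n_1,…,n_k, such that Qᵀ A Q = K_{y_1} ⊕ K_{y_2} ⊕ ⋯ ⊕ K_{y_k}. -/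
open Matrix

/-- The `m`-by-`m` cyclic permutation matrix `C_m` with `(i,j)`-entry `δ_{π(i),j}`,
where `π(i) = (i mod m) + 1` (realized 0-based by `finRotate m : i ↦ i + 1`). -/
noncomputable def cycMat (m : ℕ) : Matrix (Fin m) (Fin m) ℂ :=
  (finRotate m).permMatrix ℂ

/-- `K_y := D_y C_m` for `y ∈ ℂ^m`. -/
noncomputable def Kmat {m : ℕ} (y : Fin m → ℂ) : Matrix (Fin m) (Fin m) ℂ :=
  Matrix.diagonal y * cycMat m

namespace FrobAux

open Function

lemma coe_finRotate'' {m : ℕ} (j : Fin m) : ((finRotate m j : Fin m) : ℕ) = ((j : ℕ) + 1) % m := by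
  cases m with
  | zero => exact j.elim0
  | succ m =>
    rw [finRotate_succ_apply, Fin.val_add_one]
    split
    · next h =>
        subst h
        simp [Fin.val_last, Nat.mod_self]
    · next h =>
        have hj : (j : ℕ) < m := by
          have := j.isLt
          rcases Nat.lt_succ_iff_lt_or_eq.mp this with h' | h'
          · exact h'
          · exact absurd (Fin.ext h' : j = Fin.last m) h
        rw [Nat.mod_eq_of_lt (by omega)]

variable {n : ℕ} (σ : Equiv.Perm (Fin n))

lemma minPos (a : Fin n) : 0 < minimalPeriod (⇑σ) a := by
  haveI : Fintype (Equiv.Perm (Fin n)) := inferInstance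
  refine IsPeriodicPt.minimalPeriod_pos (orderOf_pos σ) ?_
  show (⇑σ)^[orderOf σ] a = a
  rw [← Equiv.Perm.coe_pow, pow_orderOf_eq_one]
  rfl

/-- The same-cycle setoid. -/
def scSetoid : Setoid (Fin n) := ⟨σ.SameCycle, Equiv.Perm.SameCycle.equivalence σ⟩

/-- Quotient by same-cycle: the set of cycles. -/
def Q : Type := Quotient (scSetoid σ)

noncomputable instance : Fintype (Q σ) := by
  unfold Q; exact Fintype.ofFinite _

noncomputable def g0 : (Σ q : Q σ, Fin (minimalPeriod (⇑σ) (Quotient.out q))) → Fin n :=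
  fun p => (σ ^ ((p.2 : Fin _) : ℕ)) (Quotient.out p.1)

lemma g0_inj : Function.Injective (g0 σ) := by
  rintro ⟨q, j⟩ ⟨q', j'⟩ h
  simp only [g0] at h
  have hq : q = q' := by
    have h1 : σ.SameCycle (Quotient.out q) (Quotient.out q') := by
      refine ⟨(j : ℤ) - (j' : ℤ), ?_⟩
      rw [sub_eq_neg_add, _root_.zpow_add, Equiv.Perm.mul_apply, zpow_natCast, h, _root_.zpow_neg,
        zpow_natCast]
      exact Equiv.symm_apply_apply _ _
    exact (Quotient.out_eq q).symm.trans ((@Quotient.sound _ (scSetoid σ) _ _ h1).trans (Quotient.out_eq q'))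
  subst hq
  have hj : (j : ℕ) = (j' : ℕ) := by
    refine iterate_injOn_Iio_minimalPeriod (f := ⇑σ) (x := Quotient.out q) j.isLt j'.isLt ?_
    show (⇑σ)^[(j : ℕ)] _ = (⇑σ)^[(j' : ℕ)] _
    rw [← Equiv.Perm.coe_pow, ← Equiv.Perm.coe_pow]
    exact h
  congr 1
  exact Fin.ext hj

lemma g0_surj : Function.Surjective (g0 σ) := by
  intro a
  have hsc : σ.SameCycle (Quotient.out (Quotient.mk (scSetoid σ) a)) a :=
    @Quotient.mk_out _ (scSetoid σ) a
  obtain ⟨i, _, hi⟩ := hsc.exists_pow_eq'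
  have hmod : (σ ^ (i % minimalPeriod (⇑σ) (Quotient.out (Quotient.mk (scSetoid σ) a))))
      (Quotient.out (Quotient.mk (scSetoid σ) a))
      = (σ ^ i) (Quotient.out (Quotient.mk (scSetoid σ) a)) := by
    show (⇑σ)^[i % _] _ = (⇑σ)^[i] _
    exact iterate_mod_minimalPeriod_eq
  exact ⟨⟨Quotient.mk (scSetoid σ) a,
    ⟨i % minimalPeriod (⇑σ) (Quotient.out (Quotient.mk (scSetoid σ) a)),
      Nat.mod_lt _ (minPos σ _)⟩⟩, hmod.trans hi⟩

noncomputable def g1 : (Σ q : Q σ, Fin (minimalPeriod (⇑σ) (Quotient.out q))) ≃ Fin n :=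
  Equiv.ofBijective _ ⟨g0_inj σ, g0_surj σ⟩

lemma key (q : Q σ) (j : Fin (minimalPeriod (⇑σ) (Quotient.out q))) :
    σ (g0 σ ⟨q, j⟩) = g0 σ ⟨q, finRotate _ j⟩ := by
  show σ ((σ ^ (j : ℕ)) (Quotient.out q)) = (σ ^ ((finRotate _ j : Fin _) : ℕ)) (Quotient.out q)
  rw [coe_finRotate'']
  have h1 : σ ((σ ^ (j : ℕ)) (Quotient.out q)) = (σ ^ ((j : ℕ) + 1)) (Quotient.out q) := by
    rw [pow_succ', Equiv.Perm.mul_apply]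
  rw [h1]
  show (⇑σ)^[(j : ℕ) + 1] _ = (⇑σ)^[((j : ℕ) + 1) % _] _
  exact (iterate_mod_minimalPeriod_eq).symm

end FrobAux

/-- **Frobenius normal form for monomial matrices.**
If `A = D_x P` is an `n`-by-`n` monomial matrix (`D_x` invertible diagonal, `P = P_σ` a
permutation matrix), then there are `k` with `1 ≤ k ≤ n`, positive block sizes
`n_1, …, n_k` summing to `n`, and a permutation matrix `Q = P_τ` such that, partitioning
`y = Qᵀ x` into consecutive blocks `y_i ∈ ℂ^{n_i}` (via the order-preserving bijection
`e : Σ i, Fin (n_i) ≃ Fin n`, `e ⟨i, j⟩ = n_1 + ⋯ + n_{i-1} + j`), we have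
`Qᵀ A Q = K_{y_1} ⊕ ⋯ ⊕ K_{y_k}`. -/
theorem frobenius_normal_form_monomial {n : ℕ} (hn : 0 < n)
    (x : Fin n → ℂ) (hx : ∀ i, x i ≠ 0) (σ : Equiv.Perm (Fin n))
    (A : Matrix (Fin n) (Fin n) ℂ) (hA : A = Matrix.diagonal x * σ.permMatrix ℂ) :
    ∃ (k : ℕ), 1 ≤ k ∧ k ≤ n ∧
      ∃ (ns : Fin k → ℕ), (∀ i, 0 < ns i) ∧ (∑ i, ns i) = n ∧
        ∃ (τ : Equiv.Perm (Fin n)) (e : (Σ i : Fin k, Fin (ns i)) ≃ Fin n),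
          (∀ (i : Fin k) (j : Fin (ns i)),
            ((e ⟨i, j⟩ : Fin n) : ℕ) = (∑ l ∈ Finset.Iio i, ns l) + (j : ℕ)) ∧
          (τ.permMatrix ℂ)ᵀ * A * τ.permMatrix ℂ =
            (Matrix.blockDiagonal' fun i =>
                Kmat fun j => ((τ.permMatrix ℂ)ᵀ *ᵥ x) (e ⟨i, j⟩)).submatrix
              e.symm e.symm := by
  classical
  subst hA
  open FrobAux Function in
  -- basic data
  set k := Fintype.card (Q σ) with hk
  have hQne : Nonempty (Q σ) := by
    unfold Q
    exact ⟨Quotient.mk (scSetoid σ) ⟨0, hn⟩⟩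
  let w : Fin k ≃ Q σ := (Fintype.equivFin (Q σ)).symm
  let ns : Fin k → ℕ := fun i => minimalPeriod (⇑σ) (Quotient.out (w i))
  have hpos : ∀ i, 0 < ns i := fun i => minPos σ _
  have hsum : ∑ i, ns i = n := by
    have h1 : Fintype.card (Σ q : Q σ, Fin (minimalPeriod (⇑σ) (Quotient.out q))) = n := by
      rw [Fintype.card_congr (g1 σ), Fintype.card_fin]
    rw [← h1, Fintype.card_sigma]
    exact Fintype.sum_equiv w _ _ (fun i => by simp [ns])
  -- the sigma equivalence g
  let g : (Σ i : Fin k, Fin (ns i)) ≃ Fin n :=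
    (Equiv.sigmaCongr w (fun i => Equiv.refl _)).trans (g1 σ)
  have hg : ∀ (i : Fin k) (j : Fin (ns i)), g ⟨i, j⟩ = (σ ^ (j : ℕ)) (Quotient.out (w i)) :=
    fun i j => rfl
  have hkey : ∀ (i : Fin k) (j : Fin (ns i)), σ (g ⟨i, j⟩) = g ⟨i, finRotate _ j⟩ :=
    fun i j => key σ (w i) j
  -- the order equivalence e
  have hElt : ∀ p : (Σ i : Fin k, Fin (ns i)), (∑ l ∈ Finset.Iio p.1, ns l) + (p.2 : ℕ) < n := by
    rintro ⟨i, j⟩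
    dsimp only
    have h1 : (∑ l ∈ Finset.Iio i, ns l) + ns i = ∑ l ∈ insert i (Finset.Iio i), ns l := by
      rw [Finset.sum_insert (by simp), add_comm]
    have h2 : ∑ l ∈ insert i (Finset.Iio i), ns l ≤ ∑ l, ns l :=
      Finset.sum_le_sum_of_subset (Finset.subset_univ _)
    have := j.isLt
    omega
  have hmono : ∀ (i i' : Fin k) (j : Fin (ns i)) (j' : Fin (ns i')), i < i' →
      (∑ l ∈ Finset.Iio i, ns l) + (j : ℕ) < ∑ l ∈ Finset.Iio i', ns l := by
    intro i i' j j' hlt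
    have hsub : insert i (Finset.Iio i) ⊆ Finset.Iio i' := by
      intro l hl
      simp only [Finset.mem_insert, Finset.mem_Iio] at hl ⊢
      rcases hl with rfl | hl
      · exact hlt
      · exact hl.trans hlt
    have h1 : (∑ l ∈ Finset.Iio i, ns l) + ns i = ∑ l ∈ insert i (Finset.Iio i), ns l := by
      rw [Finset.sum_insert (by simp), add_comm]
    have h2 : ∑ l ∈ insert i (Finset.Iio i), ns l ≤ ∑ l ∈ Finset.Iio i', ns l :=
      Finset.sum_le_sum_of_subset hsub
    have := j.isLt
    omega
  have hEinj : Function.Injective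
      (fun p : (Σ i : Fin k, Fin (ns i)) => (⟨_, hElt p⟩ : Fin n)) := by
    rintro ⟨i, j⟩ ⟨i', j'⟩ h
    have h' : (∑ l ∈ Finset.Iio i, ns l) + (j : ℕ)
        = (∑ l ∈ Finset.Iio i', ns l) + (j' : ℕ) := congrArg Fin.val h
    rcases lt_trichotomy i i' with hlt | rfl | hgt
    · have := hmono i i' j j' hlt
      omega
    · have : (j : ℕ) = (j' : ℕ) := by omega
      congr 1
      exact Fin.ext this
    · have := hmono i' i j' j hgt
      omega
  let e : (Σ i : Fin k, Fin (ns i)) ≃ Fin n :=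
    Equiv.ofBijective _ ((Fintype.bijective_iff_injective_and_card _).2
      ⟨hEinj, by simp [Fintype.card_sigma, hsum]⟩)
  have he : ∀ (i : Fin k) (j : Fin (ns i)),
      ((e ⟨i, j⟩ : Fin n) : ℕ) = (∑ l ∈ Finset.Iio i, ns l) + (j : ℕ) := fun i j => rfl
  -- the permutation τ
  let τ : Equiv.Perm (Fin n) := g.symm.trans e
  have hτ : ∀ p, τ.symm (e p) = g p := fun p => by
    simp [τ, Equiv.symm_trans_apply]
  -- k bounds
  have hk1 : 1 ≤ k := Fintype.card_pos
  have hk2 : k ≤ n := by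
    calc k = ∑ _i : Fin k, 1 := by simp
      _ ≤ ∑ i, ns i := Finset.sum_le_sum (fun i _ => hpos i)
      _ = n := hsum
  refine ⟨k, hk1, hk2, ns, hpos, hsum, τ, e, he, ?_⟩
  -- matrix computation
  have hy : ∀ a, ((τ.permMatrix ℂ)ᵀ *ᵥ x) a = x (τ.symm a) := by
    intro a
    simp only [Matrix.mulVec, dotProduct, Matrix.transpose_apply,
      Equiv.Perm.permMatrix, PEquiv.toMatrix_apply, Equiv.toPEquiv_apply, Option.mem_def,
      Option.some.injEq]
    have hterm : ∀ l, ((if τ l = a then (1 : ℂ) else 0) * x l)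
        = (if l = τ.symm a then x l else 0) := by
      intro l
      by_cases h : l = τ.symm a
      · subst h
        rw [if_pos (by simp), one_mul, if_pos rfl]
      · rw [if_neg, zero_mul, if_neg h]
        intro hh
        exact h (by rw [← hh]; simp)
    rw [Finset.sum_congr rfl (fun l _ => hterm l), Finset.sum_ite_eq' Finset.univ
      ((Equiv.symm τ) a) x, if_pos (Finset.mem_univ _)]
  have hL : ∀ a b,
      ((τ.permMatrix ℂ)ᵀ * (Matrix.diagonal x * σ.permMatrix ℂ) * τ.permMatrix ℂ) a b
        = if τ.symm a = σ.symm (τ.symm b) then x (τ.symm a) else 0 := by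
    intro a b
    have h1 : (τ.permMatrix ℂ)ᵀ = (τ.symm).toPEquiv.toMatrix := by
      rw [Equiv.toPEquiv_symm, PEquiv.toMatrix_symm]
    simp only [Equiv.Perm.permMatrix] at h1 ⊢
    rw [h1, PEquiv.mul_toMatrix_toPEquiv, PEquiv.mul_toMatrix_toPEquiv,
      PEquiv.toMatrix_toPEquiv_mul]
    simp [Matrix.diagonal_apply]
  ext a b
  obtain ⟨p, rfl⟩ := e.surjective a
  obtain ⟨t, rfl⟩ := e.surjective b
  obtain ⟨i, j⟩ := p
  obtain ⟨i', j'⟩ := t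
  rw [hL]
  rw [Matrix.submatrix_apply, Equiv.symm_apply_apply, Equiv.symm_apply_apply]
  have hcond : (τ.symm (e ⟨i, j⟩) = σ.symm (τ.symm (e ⟨i', j'⟩)))
      ↔ ((⟨i, finRotate _ j⟩ : Σ i : Fin k, Fin (ns i)) = ⟨i', j'⟩) := by
    rw [hτ, hτ, Equiv.eq_symm_apply, hkey, Equiv.apply_eq_iff_eq]
  have hK : ∀ (m : ℕ) (z : Fin m → ℂ) (u v : Fin m),
      Kmat z u v = if finRotate _ u = v then z u else 0 := by
    intro m z u v
    simp only [Kmat, cycMat, Matrix.diagonal_mul, Equiv.Perm.permMatrix,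
      PEquiv.toMatrix_apply, Equiv.toPEquiv_apply, Option.mem_def, Option.some.injEq,
      mul_ite, mul_one, mul_zero]
  by_cases hii : i = i'
  · subst hii
    rw [Matrix.blockDiagonal'_apply_eq, hK, hy]
    have hsig : (τ.symm (e ⟨i, j⟩) = σ.symm (τ.symm (e ⟨i, j'⟩))) ↔ (finRotate _ j = j') := by
      rw [hcond]
      constructor
      · intro h
        exact eq_of_heq (Sigma.mk.inj_iff.mp h).2
      · intro h; subst h; rfl
    by_cases hj : τ.symm (e ⟨i, j⟩) = σ.symm (τ.symm (e ⟨i, j'⟩))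
    · rw [if_pos hj, if_pos (hsig.mp hj)]
    · rw [if_neg hj, if_neg (fun hh => hj (hsig.mpr hh))]
  · rw [Matrix.blockDiagonal'_apply_ne _ _ _ hii]
    rw [if_neg]
    intro h
    exact hii (congrArg Sigma.fst (hcond.mp h))
end

section
/- Let n be a positive integer and p ∈ ℝ[t]. If p_{(r,k)} ∈ 𝒫₁ for every k ∈ {1,…,n} and every r ∈ {0,…,k−1}, then p(A) is entrywise nonnegative for every entrywise nonnegative n-by-n monomial matrix A; that is, p ∈ 𝒫ₙ^{mon}. -/
open Matrix

/-- The `r mod k`-part of `p`: `p_{(r,k)}(t) := Σ_{j ≤ deg p, j mod k = r} a_j t^j`. -/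
noncomputable def polyPart (p : Polynomial ℝ) (k r : ℕ) : Polynomial ℝ :=
  ∑ j ∈ Finset.range (p.natDegree + 1),
    if j % k = r then Polynomial.C (p.coeff j) * Polynomial.X ^ j else 0

/-- `A` is a monomial (generalized permutation) matrix: `A = D P` with `D` an
invertible diagonal matrix and `P` a permutation matrix. -/
def IsMonomialMatrix {n : ℕ} (A : Matrix (Fin n) (Fin n) ℝ) : Prop :=
  ∃ (d : Fin n → ℝ) (σ : Equiv.Perm (Fin n)),
    (∀ i, d i ≠ 0) ∧ A = Matrix.diagonal d * σ.permMatrix ℝ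

/-- Product over `range (r + k*q)` of a `k`-periodic function. -/
lemma prod_periodic_aux (f : ℕ → ℝ) (k : ℕ) (hf : ∀ t, f (k + t) = f t) :
    ∀ (q r : ℕ), ∏ t ∈ Finset.range (r + k * q), f t
      = (∏ t ∈ Finset.range k, f t) ^ q * ∏ t ∈ Finset.range r, f t := by
  intro q
  induction q with
  | zero => simp
  | succ q ih =>
    intro r
    have hsplit : r + k * (q + 1) = k + (r + k * q) := by ring
    rw [hsplit, Finset.prod_range_add]
    have h2 : ∏ t ∈ Finset.range (r + k * q), f (k + t)
        = ∏ t ∈ Finset.range (r + k * q), f t :=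
      Finset.prod_congr rfl fun t _ => hf t
    rw [h2, ih r]
    ring

/-- Entries of powers of a monomial matrix. -/
lemma monomial_pow_apply {n : ℕ} (d : Fin n → ℝ) (σ : Equiv.Perm (Fin n)) :
    ∀ (m : ℕ) (i j : Fin n), ((Matrix.diagonal d * σ.permMatrix ℝ) ^ m) i j
      = if (σ ^ m) i = j then ∏ t ∈ Finset.range m, d ((σ ^ t) i) else 0 := by
  intro m
  induction m with
  | zero =>
    intro i j
    simp [Matrix.one_apply]
  | succ m ih =>
    intro i j
    rw [pow_succ']
    rw [Matrix.mul_apply]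
    have hentry : ∀ l : Fin n, (Matrix.diagonal d * σ.permMatrix ℝ) i l
        = if σ i = l then d i else 0 := by
      intro l
      rw [Matrix.diagonal_mul, Equiv.Perm.permMatrix, PEquiv.toMatrix_apply,
        Equiv.toPEquiv_apply]
      by_cases hl : σ i = l
      · simp [hl, Option.mem_def]
      · simp [Option.mem_def, hl, Ne.symm hl]
    have hsum : ∑ l, (Matrix.diagonal d * σ.permMatrix ℝ) i l
          * ((Matrix.diagonal d * σ.permMatrix ℝ) ^ m) l j
        = d i * ((Matrix.diagonal d * σ.permMatrix ℝ) ^ m) (σ i) j := by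
      rw [Finset.sum_eq_single (σ i)]
      · rw [hentry (σ i), if_pos rfl]
      · intro l _ hl
        rw [hentry l, if_neg (Ne.symm hl), zero_mul]
      · intro habs; exact absurd (Finset.mem_univ _) habs
    rw [hsum, ih (σ i) j]
    have hcond : (σ ^ m) (σ i) = (σ ^ (m + 1)) i := by
      rw [pow_succ, Equiv.Perm.mul_apply]
    by_cases hc : (σ ^ (m + 1)) i = j
    · rw [if_pos (hcond.trans hc), if_pos hc]
      rw [Finset.prod_range_succ']
      have : ∀ t, d ((σ ^ (t + 1)) i) = d ((σ ^ t) (σ i)) := by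
        intro t; rw [pow_succ, Equiv.Perm.mul_apply]
      simp only [this, pow_zero, Equiv.Perm.coe_one, id_eq]
      ring
    · rw [if_neg (fun hh => hc (hcond.symm.trans hh)), if_neg hc, mul_zero]

/-- Let `n ≥ 1` and `p ∈ ℝ[t]`. If `p_{(r,k)} ∈ 𝒫₁` for every
`k ∈ {1,…,n}` and every `r ∈ {0,…,k-1}`, then `p(A)` is entrywise nonnegative for every
entrywise nonnegative `n`-by-`n` monomial matrix `A`; that is, `p ∈ 𝒫ₙ^{mon}`. -/
theorem mem_Pn_mon_of_polyPart (n : ℕ) (hn : 0 < n) (p : Polynomial ℝ)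
    (h : ∀ k, 1 ≤ k → k ≤ n → ∀ r < k, ∀ a : ℝ, 0 ≤ a → 0 ≤ (polyPart p k r).eval a) :
    ∀ A : Matrix (Fin n) (Fin n) ℝ, IsMonomialMatrix A → (∀ i j, 0 ≤ A i j) →
      ∀ i j, 0 ≤ Polynomial.aeval A p i j := by
  rintro A ⟨d, σ, hd, rfl⟩ hA i j
  have key := monomial_pow_apply d σ
  -- the diagonal entries are positive
  have hdpos : ∀ l, 0 < d l := by
    intro l
    have h1 := key 1 l (σ l)
    rw [pow_one, pow_one, if_pos rfl, Finset.prod_range_one, pow_zero] at h1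
    have h2 := hA l (σ l)
    rw [h1] at h2
    simp only [Equiv.Perm.coe_one, id_eq] at h2
    exact lt_of_le_of_ne h2 (Ne.symm (hd l))
  -- the minimal period of i
  set k := Function.minimalPeriod (⇑σ) i with hkdef
  have hper : i ∈ Function.periodicPts ⇑σ := by
    refine Function.mk_mem_periodicPts (orderOf_pos σ) ?_
    show (⇑σ)^[orderOf σ] i = i
    rw [Equiv.Perm.iterate_eq_pow, pow_orderOf_eq_one]
    rfl
  have hk0 : 0 < k := Function.minimalPeriod_pos_of_mem_periodicPts hper
  have hkn : k ≤ n := by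
    have hinj := Function.iterate_injOn_Iio_minimalPeriod (f := ⇑σ) (x := i)
    have hcard : (Finset.range k).card ≤ (Finset.univ : Finset (Fin n)).card := by
      apply Finset.card_le_card_of_injOn (fun t => (⇑σ)^[t] i)
        (fun _ _ => Finset.mem_univ _)
      intro a ha b hb hab
      exact hinj (by simpa using Finset.mem_range.mp ha)
        (by simpa using Finset.mem_range.mp hb) hab
    simpa using hcard
  have hki : (σ ^ k) i = i := by
    have := Function.iterate_minimalPeriod (f := ⇑σ) (x := i)
    rwa [Equiv.Perm.iterate_eq_pow] at this
  have hmod : ∀ m : ℕ, (σ ^ m) i = (σ ^ (m % k)) i := by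
    intro m
    have := Function.iterate_mod_minimalPeriod_eq (f := ⇑σ) (x := i) (n := m)
    rw [Equiv.Perm.iterate_eq_pow, Equiv.Perm.iterate_eq_pow] at this
    exact this.symm
  have hfper : ∀ t, d ((σ ^ (k + t)) i) = d ((σ ^ t) i) := by
    intro t
    rw [add_comm, pow_add, Equiv.Perm.mul_apply, hki]
  set c : ℝ := ∏ t ∈ Finset.range k, d ((σ ^ t) i) with hcdef
  have hc : 0 < c := Finset.prod_pos fun t _ => hdpos _
  set b : ℝ := c ^ ((k : ℝ)⁻¹) with hbdef
  have hb : 0 < b := Real.rpow_pos_of_pos hc _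
  have hbk : b ^ k = c := Real.rpow_inv_natCast_pow hc.le hk0.ne'
  have hprod : ∀ m : ℕ, ∏ t ∈ Finset.range m, d ((σ ^ t) i)
      = c ^ (m / k) * ∏ t ∈ Finset.range (m % k), d ((σ ^ t) i) := by
    intro m
    conv_lhs => rw [← Nat.mod_add_div m k]
    exact prod_periodic_aux _ k hfper (m / k) (m % k)
  -- expand the polynomial
  have haeval : Polynomial.aeval (Matrix.diagonal d * σ.permMatrix ℝ) p i j
      = ∑ m ∈ Finset.range (p.natDegree + 1),
          p.coeff m * ((Matrix.diagonal d * σ.permMatrix ℝ) ^ m) i j := by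
    rw [Polynomial.aeval_eq_sum_range, Matrix.sum_apply]
    exact Finset.sum_congr rfl fun m _ => by simp [Matrix.smul_apply]
  rw [haeval, ← Finset.sum_fiberwise_of_maps_to
    (g := fun m => m % k) (t := Finset.range k)
    (fun m _ => Finset.mem_range.mpr (Nat.mod_lt m hk0)) _]
  apply Finset.sum_nonneg
  intro r hr
  have hrk : r < k := Finset.mem_range.mp hr
  by_cases hcase : (σ ^ r) i = j
  · -- all entries in this fiber are positive multiples of powers of b
    have hterm : ∀ m ∈ (Finset.range (p.natDegree + 1)).filter (fun m => m % k = r),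
        p.coeff m * ((Matrix.diagonal d * σ.permMatrix ℝ) ^ m) i j
          = ((∏ t ∈ Finset.range r, d ((σ ^ t) i)) / b ^ r) * (p.coeff m * b ^ m) := by
      intro m hm
      obtain ⟨hm1, hm2⟩ := Finset.mem_filter.mp hm
      have hmj : (σ ^ m) i = j := by rw [hmod m, hm2]; exact hcase
      rw [key m i j, if_pos hmj, hprod m, hm2]
      have hbm : b ^ m = c ^ (m / k) * b ^ r := by
        conv_lhs => rw [← Nat.mod_add_div m k, hm2]
        rw [pow_add, pow_mul, hbk]
        ring
      rw [hbm]
      field_simp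
    rw [Finset.sum_congr rfl hterm, ← Finset.mul_sum]
    apply mul_nonneg
    · apply div_nonneg (Finset.prod_nonneg fun t _ => (hdpos _).le) (pow_nonneg hb.le r)
    · have heval : (polyPart p k r).eval b
          = ∑ m ∈ (Finset.range (p.natDegree + 1)).filter (fun m => m % k = r),
              p.coeff m * b ^ m := by
        rw [polyPart, Polynomial.eval_finset_sum, Finset.sum_filter]
        refine Finset.sum_congr rfl fun m _ => ?_
        by_cases hmr : m % k = r
        · rw [if_pos hmr, if_pos hmr]
          simp
        · rw [if_neg hmr, if_neg hmr, Polynomial.eval_zero]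
      rw [← heval]
      exact h k hk0 hkn r hrk b hb.le
  · -- all entries in this fiber vanish
    rw [Finset.sum_eq_zero]
    intro m hm
    obtain ⟨_, hm2⟩ := Finset.mem_filter.mp hm
    have hmj : (σ ^ m) i ≠ j := by rw [hmod m, hm2]; exact hcase
    rw [key m i j, if_neg hmj, mul_zero]
end

section
/- Let n be a positive integer and p ∈ ℝ[t]. If p ∈ 𝒫ₙ^{mon}, i.e., p(A) is entrywise nonnegative for every entrywise nonnegative n-by-n monomial matrix A, then p_{(r,k)} ∈ 𝒫₁ for every k ∈ {1,…,n} and every r ∈ {0,…,k−1}. -/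
open Matrix

private lemma mod_helper (k a b x : ℕ) : ((x + a) % k + b) % k = (x + a + b) % k :=
  Nat.ModEq.add_right b (Nat.mod_modEq (x + a) k)

/-- The `k`-cycle on the first `k` elements of `Fin n`. -/
noncomputable def cycPerm (n k : ℕ) (hk : 1 ≤ k) (hkn : k ≤ n) : Equiv.Perm (Fin n) where
  toFun i := if h : i.val < k then ⟨(i.val + 1) % k, lt_of_lt_of_le (Nat.mod_lt _ hk) hkn⟩ else i
  invFun i := if h : i.val < k then ⟨(i.val + (k - 1)) % k, lt_of_lt_of_le (Nat.mod_lt _ hk) hkn⟩ else i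
  left_inv i := by
    by_cases h : i.val < k
    · simp only [h, dif_pos, Nat.mod_lt _ hk, Fin.ext_iff]
      rw [mod_helper]
      have : i.val + 1 + (k - 1) = i.val + k := by omega
      rw [this, Nat.add_mod_right, Nat.mod_eq_of_lt h]
    · simp [h]
  right_inv i := by
    by_cases h : i.val < k
    · simp only [h, dif_pos, Nat.mod_lt _ hk, Fin.ext_iff]
      rw [mod_helper]
      have : i.val + (k - 1) + 1 = i.val + k := by omega
      rw [this, Nat.add_mod_right, Nat.mod_eq_of_lt h]
    · simp [h]

lemma cycPerm_pow (n k : ℕ) (hk : 1 ≤ k) (hkn : k ≤ n) (hn : 0 < n) (m : ℕ) :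
    ((cycPerm n k hk hkn) ^ m) ⟨0, hn⟩ =
      ⟨m % k, lt_of_lt_of_le (Nat.mod_lt _ hk) hkn⟩ := by
  induction m with
  | zero => simp [Fin.ext_iff, Nat.mod_eq_of_lt hk]  -- careful: 0 % k = 0
  | succ m ih =>
    rw [pow_succ', Equiv.Perm.mul_apply, ih]
    have hlt : m % k < k := Nat.mod_lt _ hk
    simp only [cycPerm, Equiv.coe_fn_mk, hlt, dif_pos, Fin.ext_iff]
    have h2 := mod_helper k 0 1 m
    exact h2

lemma permMatrix_pow {n : ℕ} (σ : Equiv.Perm (Fin n)) (m : ℕ) :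
    (σ.permMatrix ℝ) ^ m = (σ ^ m).permMatrix ℝ := by
  induction m with
  | zero =>
    rw [pow_zero, pow_zero,
      show (1 : Equiv.Perm (Fin n)) = Equiv.refl (Fin n) from rfl]
    rw [Equiv.Perm.permMatrix, Equiv.toPEquiv_refl, PEquiv.toMatrix_refl]
  | succ m ih =>
    rw [pow_succ', ih,
      show σ ^ (m + 1) = σ ^ m * σ from pow_succ σ m,
      show (σ ^ m * σ : Equiv.Perm (Fin n)) = Equiv.trans σ (σ ^ m) from rfl,
      show Equiv.Perm.permMatrix ℝ (Equiv.trans σ (σ ^ m)) =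
        ((Equiv.trans σ (σ ^ m)).toPEquiv).toMatrix from rfl,
      Equiv.toPEquiv_trans, PEquiv.toMatrix_trans]

lemma key_pos (n : ℕ) (hn : 0 < n) (p : Polynomial ℝ)
    (h : ∀ A : Matrix (Fin n) (Fin n) ℝ, IsMonomialMatrix A → (∀ i j, 0 ≤ A i j) →
      ∀ i j, 0 ≤ Polynomial.aeval A p i j)
    (k : ℕ) (hk : 1 ≤ k) (hkn : k ≤ n) (r : ℕ) (hr : r < k)
    (c : ℝ) (hc : 0 < c) : 0 ≤ (polyPart p k r).eval c := by
  set σ := cycPerm n k hk hkn with hσ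
  set P : Matrix (Fin n) (Fin n) ℝ := σ.permMatrix ℝ with hP
  set A : Matrix (Fin n) (Fin n) ℝ := Matrix.diagonal (fun _ => c) * P with hA
  have hAsmul : A = c • P := by
    ext i j
    simp [hA, Matrix.diagonal_mul]
  have hPentry : ∀ (m : ℕ) (i j : Fin n),
      (P ^ m) i j = if (σ ^ m) i = j then 1 else 0 := by
    intro m i j
    rw [hP, permMatrix_pow]
    simp [Equiv.Perm.permMatrix, PEquiv.toMatrix_apply, Equiv.toPEquiv_apply,
      Option.mem_some_iff, eq_comm]
  have hmono : IsMonomialMatrix A := ⟨fun _ => c, σ, fun _ => ne_of_gt hc, rfl⟩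
  have hnonneg : ∀ i j, 0 ≤ A i j := by
    intro i j
    rw [hAsmul, Matrix.smul_apply]
    have := hPentry 1 i j
    rw [pow_one] at this
    rw [this, pow_one]
    split <;> simp [le_of_lt hc]
  have hval := h A hmono hnonneg ⟨0, hn⟩ ⟨r, lt_of_lt_of_le hr hkn⟩
  have heval : Polynomial.aeval A p ⟨0, hn⟩ ⟨r, lt_of_lt_of_le hr hkn⟩ =
      (polyPart p k r).eval c := by
    rw [Polynomial.aeval_eq_sum_range, polyPart, Polynomial.eval_finset_sum]
    rw [Matrix.sum_apply]
    apply Finset.sum_congr rfl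
    intro m _
    rw [Matrix.smul_apply, hAsmul, smul_pow, Matrix.smul_apply, hPentry,
      cycPerm_pow n k hk hkn hn m]
    by_cases hmk : m % k = r
    · rw [if_pos (by simp [Fin.ext_iff, hmk]), if_pos hmk]
      simp only [smul_eq_mul, mul_one, Polynomial.eval_mul, Polynomial.eval_C,
        Polynomial.eval_pow, Polynomial.eval_X]
    · rw [if_neg (by simp [Fin.ext_iff, hmk]), if_neg hmk]
      simp
  rw [heval] at hval
  exact hval

/-- Let `n ≥ 1` and `p ∈ ℝ[t]`. If `p ∈ 𝒫ₙ^{mon}`, i.e., `p(A)` is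
entrywise nonnegative for every entrywise nonnegative `n`-by-`n` monomial matrix `A`,
then `p_{(r,k)} ∈ 𝒫₁` for every `k ∈ {1,…,n}` and every `r ∈ {0,…,k-1}`. -/
theorem polyPart_of_mem_Pn_mon (n : ℕ) (hn : 0 < n) (p : Polynomial ℝ)
    (h : ∀ A : Matrix (Fin n) (Fin n) ℝ, IsMonomialMatrix A → (∀ i j, 0 ≤ A i j) →
      ∀ i j, 0 ≤ Polynomial.aeval A p i j) :
    ∀ k, 1 ≤ k → k ≤ n → ∀ r < k, ∀ a : ℝ, 0 ≤ a → 0 ≤ (polyPart p k r).eval a := by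
  intro k hk hkn r hr a ha
  rcases eq_or_lt_of_le ha with h0 | hpos
  · have tend : Filter.Tendsto (fun x : ℝ => (polyPart p k r).eval x)
        (nhdsWithin a (Set.Ioi a)) (nhds ((polyPart p k r).eval a)) :=
      ((polyPart p k r).continuous.tendsto a).mono_left nhdsWithin_le_nhds
    refine ge_of_tendsto tend ?_
    filter_upwards [self_mem_nhdsWithin] with x hx
    exact key_pos n hn p h k hk hkn r hr x (h0 ▸ hx)
  · exact key_pos n hn p h k hk hkn r hr a hpos
end
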